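/- arXiv:1307.5494 — 3 statements merged into one kernel-verified Lean document; each statement's English description precedes it below -/
import Mathlib

section
/- Let w ∈ ℝ^d and r ∈ ℝ^n. The characteristic polynomial of the matrix M = [[I + w wᵀ, ‖r‖ w], [‖r‖ wᵀ, ‖r‖²]] equals (1−λ)^{d−1} (λ² − λ(‖w‖² + ‖r‖² + 1) + ‖r‖²). -/
open Matrix

noncomputable def blockM {d n : ℕ} (w : EuclideanSpace ℝ (Fin d))
    (r : EuclideanSpace ℝ (Fin n)) : Matrix (Fin d ⊕ Unit) (Fin d ⊕ Unit) ℝ :=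
  Matrix.fromBlocks (1 + Matrix.vecMulVec w w)
    (Matrix.of fun i _ => ‖r‖ * w i)
    (Matrix.of fun _ j => ‖r‖ * w j)
    (Matrix.of fun _ _ => ‖r‖ ^ 2)

lemma decomp {d n : ℕ} (w : EuclideanSpace ℝ (Fin d)) (r : EuclideanSpace ℝ (Fin n)) (lam : ℝ) :
    blockM w r - lam • 1 =
      diagonal (Sum.elim (fun _ : Fin d => 1 - lam) (fun _ : Unit => -lam)) +
        replicateCol Unit (Sum.elim w fun _ => ‖r‖) * replicateRow Unit (Sum.elim w fun _ => ‖r‖) := by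
  ext i j
  rcases i with i | i <;> rcases j with j | j <;>
    simp [blockM, Matrix.mul_apply, Matrix.one_apply, Matrix.diagonal_apply,
      Matrix.vecMulVec_apply, Sum.elim_inl, Sum.elim_inr, apply_ite] <;> ring_nf
  split <;> ring

lemma key {d : ℕ} (hd : 1 ≤ d) (w : Fin d → ℝ) (ρ lam : ℝ) (h0 : lam ≠ 0) (h1 : lam ≠ 1) :
    (diagonal (Sum.elim (fun _ : Fin d => 1 - lam) (fun _ : Unit => -lam)) +
        replicateCol Unit (Sum.elim w fun _ => ρ) * replicateRow Unit (Sum.elim w fun _ => ρ)).det =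
      (1 - lam) ^ (d - 1) * (lam ^ 2 - lam * ((∑ i, w i ^ 2) + ρ ^ 2 + 1) + ρ ^ 2) := by
  have h1' : (1 : ℝ) - lam ≠ 0 := sub_ne_zero.mpr (Ne.symm h1)
  have hdet : (diagonal (Sum.elim (fun _ : Fin d => 1 - lam) (fun _ : Unit => -lam))).det
      = (1 - lam) ^ d * (-lam) := by
    simp [Matrix.det_diagonal, Fintype.prod_sum_type]
  have hunit : IsUnit (diagonal (Sum.elim (fun _ : Fin d => 1 - lam) (fun _ : Unit => -lam))).det := by
    rw [hdet]
    exact (IsUnit.mk0 _ (by positivity)).mul (IsUnit.mk0 _ (neg_ne_zero.mpr h0))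
  have hinv : (diagonal (Sum.elim (fun _ : Fin d => 1 - lam) (fun _ : Unit => -lam)))⁻¹
      = diagonal (Sum.elim (fun _ : Fin d => (1 - lam)⁻¹) (fun _ : Unit => (-lam)⁻¹)) := by
    refine Matrix.inv_eq_left_inv ?_
    rw [Matrix.diagonal_mul_diagonal, ← Matrix.diagonal_one]
    ext i j
    rcases i with i | i <;> rcases j with j | j <;>
      simp [Matrix.diagonal_apply, Matrix.one_apply, inv_mul_cancel₀ h1',
        inv_mul_cancel₀ (neg_ne_zero.mpr h0), inv_mul_cancel₀ h0, Sum.inl.injEq]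
  rw [Matrix.det_add_replicateCol_mul_replicateRow hunit, hdet, Matrix.det_unique, hinv]
  simp [Matrix.mul_apply, Matrix.diagonal_apply, Fintype.sum_sum_type]
  have hs : ∑ x, w x * (1 - lam)⁻¹ * w x = (∑ i, w i ^ 2) * (1 - lam)⁻¹ := by
    rw [Finset.sum_mul]; exact Finset.sum_congr rfl fun x _ => by ring
  rw [hs]
  have hpow : (1 - lam) ^ d = (1 - lam) ^ (d - 1) * (1 - lam) := by
    rw [← pow_succ, Nat.sub_add_cancel hd]
  rw [hpow]
  field_simp [h0, h1']
  ring

theorem stmt3 {d n : ℕ} (hd : 1 ≤ d) (w : EuclideanSpace ℝ (Fin d))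
    (r : EuclideanSpace ℝ (Fin n)) (lam : ℝ) :
    (blockM w r - lam • 1).det =
      (1 - lam) ^ (d - 1) * (lam ^ 2 - lam * (‖w‖ ^ 2 + ‖r‖ ^ 2 + 1) + ‖r‖ ^ 2) := by
  have hw : ‖w‖ ^ 2 = ∑ i, w i ^ 2 := by
    rw [EuclideanSpace.norm_eq, Real.sq_sqrt (Finset.sum_nonneg fun i _ => sq_nonneg _)]
    simp [sq_abs]
  have hkey : ∀ x : ℝ, x ≠ 0 → x ≠ 1 →
      (blockM w r - x • 1).det =
        (1 - x) ^ (d - 1) * (x ^ 2 - x * (‖w‖ ^ 2 + ‖r‖ ^ 2 + 1) + ‖r‖ ^ 2) := by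
    intro x hx0 hx1
    rw [decomp, key hd w ‖r‖ x hx0 hx1, hw]
  have hdense : Dense ({0, 1} : Set ℝ)ᶜ :=
    Set.Countable.dense_compl ℝ (Set.Finite.countable (Set.toFinite _))
  have hf : Continuous fun x : ℝ => (blockM w r - x • 1).det :=
    Continuous.matrix_det (continuous_const.sub (continuous_id.smul continuous_const))
  have hg : Continuous fun x : ℝ =>
      (1 - x) ^ (d - 1) * (x ^ 2 - x * (‖w‖ ^ 2 + ‖r‖ ^ 2 + 1) + ‖r‖ ^ 2) := by
    fun_prop
  have := Continuous.ext_on hdense hf hg (fun x hx => by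
    simp only [Set.mem_compl_iff, Set.mem_insert_iff, Set.mem_singleton_iff, not_or] at hx
    exact hkey x hx.1 hx.2)
  exact congrFun this lam
end

section
/- Let U be an n×d matrix with orthonormal columns, w ∈ ℝ^d with w ≠ 0, r ∈ ℝ^n with r ≠ 0 and Uᵀ r = 0, and α, β ∈ ℝ with α²‖w‖² + β² = 1. Let Z be a d×(d−1) matrix with orthonormal columns spanning the orthogonal complement of w in ℝ^d. Then the matrix U' = U(α w wᵀ/‖w‖ + Z Zᵀ) + β (r/‖r‖)(wᵀ/‖w‖) equals U + [(α‖w‖ − 1) Uw/‖w‖ + β r/‖r‖] wᵀ/‖w‖, and U' has orthonormal columns. -/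
open Matrix

private lemma aux_mul_vmv {m k l : ℕ} (A : Matrix (Fin m) (Fin k) ℝ) (u : Fin k → ℝ)
    (v : Fin l → ℝ) : A * vecMulVec u v = vecMulVec (A.mulVec u) v := by
  ext i j
  simp [mul_apply, vecMulVec_apply, mulVec, dotProduct, Finset.sum_mul, mul_assoc]

private lemma aux_vmv_mul {m k l : ℕ} (a : Fin m → ℝ) (b : Fin k → ℝ) (c : Fin k → ℝ)
    (d : Fin l → ℝ) : vecMulVec a b * vecMulVec c d = (b ⬝ᵥ c) • vecMulVec a d := by
  ext i j
  simp only [mul_apply, vecMulVec_apply, Matrix.smul_apply, dotProduct, smul_eq_mul, Finset.sum_mul]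
  exact Finset.sum_congr rfl (fun k _ => by ring)

private lemma aux_vmv_t {m k : ℕ} (a : Fin m → ℝ) (b : Fin k → ℝ) :
    (vecMulVec a b)ᵀ = vecMulVec b a := by
  ext i j; simp [vecMulVec_apply, mul_comm]

private lemma aux_vmv_bilin {m k : ℕ} (a b c : ℝ) (x y : Fin m → ℝ) (z : Fin k → ℝ) :
    vecMulVec (a • x + b • y) (c • z)
      = (a * c) • vecMulVec x z + (b * c) • vecMulVec y z := by
  ext i j; simp [vecMulVec_apply]; ring

private lemma aux_dot_self {k : ℕ} (w : EuclideanSpace ℝ (Fin k)) :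
    (w : Fin k → ℝ) ⬝ᵥ (w : Fin k → ℝ) = ‖w‖ ^ 2 := by
  rw [← real_inner_self_eq_norm_sq]
  simp only [PiLp.inner_apply, dotProduct, RCLike.inner_apply, conj_trivial]

theorem stmt13 {n d : ℕ} (U : Matrix (Fin n) (Fin d) ℝ) (hU : Uᵀ * U = 1)
    (w : EuclideanSpace ℝ (Fin d)) (hw : w ≠ 0)
    (r : EuclideanSpace ℝ (Fin n)) (hr : r ≠ 0) (hUr : Uᵀ.mulVec r = 0)
    (α β : ℝ) (hαβ : α ^ 2 * ‖w‖ ^ 2 + β ^ 2 = 1)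
    (Z : Matrix (Fin d) (Fin (d - 1)) ℝ) (hZ : Zᵀ * Z = 1)
    (hZw : Zᵀ.mulVec w = 0)
    (hZZ : Z * Zᵀ = 1 - (‖w‖ ^ 2)⁻¹ • Matrix.vecMulVec w w)
    (U' : Matrix (Fin n) (Fin d) ℝ)
    (hU' : U' = U * ((α / ‖w‖) • Matrix.vecMulVec w w + Z * Zᵀ) +
      (β / (‖r‖ * ‖w‖)) • Matrix.vecMulVec r w) :
    U' = U + Matrix.vecMulVec
        (((α * ‖w‖ - 1) / ‖w‖) • (WithLp.equiv 2 (Fin n → ℝ)).symm (U.mulVec w) + (β / ‖r‖) • r) ((‖w‖)⁻¹ • w) ∧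
      U'ᵀ * U' = 1 := by
  have hwn : ‖w‖ ≠ 0 := norm_ne_zero_iff.mpr hw
  have hrn : ‖r‖ ≠ 0 := norm_ne_zero_iff.mpr hr
  set c1 : ℝ := (α * ‖w‖ - 1) / ‖w‖ ^ 2 with hc1
  set c2 : ℝ := β / (‖r‖ * ‖w‖) with hc2
  set V1 : Matrix (Fin n) (Fin d) ℝ := vecMulVec (U.mulVec w) w with hV1
  set V2 : Matrix (Fin n) (Fin d) ℝ := vecMulVec (r : Fin n → ℝ) (w : Fin d → ℝ) with hV2
  -- canonical form of U'
  have hc1' : α / ‖w‖ - (‖w‖ ^ 2)⁻¹ = c1 := by rw [hc1]; field_simp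
  have key : U' = U + c1 • V1 + c2 • V2 := by
    rw [hU', hZZ, Matrix.mul_add, Matrix.mul_smul, Matrix.mul_sub, Matrix.mul_one,
      Matrix.mul_smul, aux_mul_vmv]
    have hh : c1 • V1 = (α / ‖w‖) • V1 - (‖w‖ ^ 2)⁻¹ • V1 := by rw [← sub_smul, hc1']
    rw [hh]
    abel
  constructor
  · -- first part
    rw [key]
    have hb : vecMulVec
        (((α * ‖w‖ - 1) / ‖w‖) • ((WithLp.equiv 2 (Fin n → ℝ)).symm (U.mulVec w) : Fin n → ℝ)
          + (β / ‖r‖) • (r : Fin n → ℝ)) ((‖w‖)⁻¹ • (w : Fin d → ℝ))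
        = ((α * ‖w‖ - 1) / ‖w‖ * (‖w‖)⁻¹) • V1 + (β / ‖r‖ * (‖w‖)⁻¹) • V2 := by
      rw [hV1, hV2, ← aux_vmv_bilin]
      rfl
    simp only [WithLp.ofLp_add, WithLp.ofLp_smul]
    rw [hb]
    have h1 : (α * ‖w‖ - 1) / ‖w‖ * (‖w‖)⁻¹ = c1 := by
      rw [hc1]; ring
    have h2 : β / ‖r‖ * (‖w‖)⁻¹ = c2 := by
      rw [hc2]; ring
    rw [h1, h2]; abel
  · -- second part
    have hUUw : Uᵀ.mulVec (U.mulVec w) = (w : Fin d → ℝ) := by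
      rw [Matrix.mulVec_mulVec, hU, Matrix.one_mulVec]
    have e1 : Uᵀ * V1 = vecMulVec (w : Fin d → ℝ) w := by
      rw [hV1, aux_mul_vmv, hUUw]
    have e2 : Uᵀ * V2 = 0 := by
      rw [hV2, aux_mul_vmv, hUr]
      ext i j; simp [vecMulVec_apply]
    have e3 : V1ᵀ * U = vecMulVec (w : Fin d → ℝ) w := by
      have : V1ᵀ * U = (Uᵀ * V1)ᵀ := by rw [transpose_mul, transpose_transpose]
      rw [this, e1, aux_vmv_t]
    have e4 : V2ᵀ * U = 0 := by
      have : V2ᵀ * U = (Uᵀ * V2)ᵀ := by rw [transpose_mul, transpose_transpose]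
      rw [this, e2, transpose_zero]
    have hUwUw : (U.mulVec w) ⬝ᵥ (U.mulVec w) = ‖w‖ ^ 2 := by
      rw [Matrix.dotProduct_mulVec, ← Matrix.mulVec_transpose, hUUw, aux_dot_self]
    have hUwr : (w : Fin d → ℝ) ⬝ᵥ (Uᵀ.mulVec r) = 0 := by rw [hUr, dotProduct_zero]
    have hwUr : (U.mulVec w) ⬝ᵥ (r : Fin n → ℝ) = 0 := by
      rw [dotProduct_comm, Matrix.dotProduct_mulVec, ← Matrix.mulVec_transpose, hUr,
        zero_dotProduct]
    have hrUw : (r : Fin n → ℝ) ⬝ᵥ (U.mulVec w) = 0 := by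
      rw [dotProduct_comm, hwUr]
    have e5 : V1ᵀ * V1 = (‖w‖ ^ 2) • vecMulVec (w : Fin d → ℝ) w := by
      rw [hV1, aux_vmv_t, aux_vmv_mul, hUwUw]
    have e6 : V1ᵀ * V2 = 0 := by
      rw [hV1, hV2, aux_vmv_t, aux_vmv_mul, hwUr, zero_smul]
    have e7 : V2ᵀ * V1 = 0 := by
      rw [hV1, hV2, aux_vmv_t, aux_vmv_mul, hrUw, zero_smul]
    have e8 : V2ᵀ * V2 = (‖r‖ ^ 2) • vecMulVec (w : Fin d → ℝ) w := by
      rw [hV2, aux_vmv_t, aux_vmv_mul, aux_dot_self]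
    have main : U'ᵀ * U' = 1 +
        (c1 + c1 + (c1 * c1 * ‖w‖ ^ 2 + c2 * c2 * ‖r‖ ^ 2)) • vecMulVec (w : Fin d → ℝ) w := by
      rw [key]
      simp only [transpose_add, transpose_smul, Matrix.add_mul, Matrix.mul_add,
        Matrix.smul_mul, Matrix.mul_smul, hU, e1, e2, e3, e4, e5, e6, e7, e8, smul_zero,
        add_zero, smul_smul]
      module
    rw [main]
    have hcoef : c1 + c1 + (c1 * c1 * ‖w‖ ^ 2 + c2 * c2 * ‖r‖ ^ 2) = 0 := by
      rw [hc1, hc2]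
      field_simp
      linear_combination hαβ
    rw [hcoef, zero_smul, add_zero]
end

section
/- Let U be an n×d matrix with orthonormal columns, w ∈ ℝ^d nonzero, p = Uw, and r ∈ ℝ^n nonzero with Uᵀ r = 0. For any θ ∈ ℝ, the matrix U' = U + (cos θ − 1)(p/‖p‖)(wᵀ/‖w‖) + sin θ (r/‖r‖)(wᵀ/‖w‖) satisfies U'ᵀ U' = I_d (i.e., the GROUSE update preserves orthonormality of the columns). -/
set_option maxHeartbeats 1000000


open Matrix

private lemma vvT {m k : ℕ} (u : Fin m → ℝ) (v : Fin k → ℝ) :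
    (vecMulVec u v)ᵀ = vecMulVec v u := by
  ext i j; simp [vecMulVec_apply, mul_comm]

private lemma mul_vv {m k l : ℕ} (M : Matrix (Fin m) (Fin k) ℝ) (x : Fin k → ℝ)
    (y : Fin l → ℝ) : M * vecMulVec x y = vecMulVec (M.mulVec x) y := by
  ext i j
  simp only [mul_apply, vecMulVec_apply, mulVec, dotProduct, Finset.sum_mul]
  exact Finset.sum_congr rfl fun k _ => by ring

private lemma vv_mul {m k l : ℕ} (x : Fin m → ℝ) (y : Fin k → ℝ)
    (M : Matrix (Fin k) (Fin l) ℝ) : vecMulVec x y * M = vecMulVec x (y ᵥ* M) := by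
  ext i j
  simp only [mul_apply, vecMulVec_apply, vecMul, dotProduct, Finset.mul_sum]
  exact Finset.sum_congr rfl fun k _ => by ring

private lemma vv_mul_vv {m k l : ℕ} (u : Fin m → ℝ) (v x : Fin k → ℝ) (y : Fin l → ℝ) :
    vecMulVec u v * vecMulVec x y = (v ⬝ᵥ x) • vecMulVec u y := by
  ext i j
  simp only [mul_apply, vecMulVec_apply, dotProduct, Matrix.smul_apply, smul_eq_mul,
    Finset.sum_mul]
  exact Finset.sum_congr rfl fun k _ => by ring

theorem stmt14 {n d : ℕ} (U : Matrix (Fin n) (Fin d) ℝ) (hU : Uᵀ * U = 1)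
    (w : EuclideanSpace ℝ (Fin d)) (hw : w ≠ 0)
    (r : EuclideanSpace ℝ (Fin n)) (hr : r ≠ 0) (hUr : Uᵀ.mulVec r = 0)
    (p : EuclideanSpace ℝ (Fin n)) (hp : p = (WithLp.equiv 2 (Fin n → ℝ)).symm (U.mulVec w))
    (θ : ℝ) :
    (U + (Real.cos θ - 1) • Matrix.vecMulVec ((‖p‖)⁻¹ • p) ((‖w‖)⁻¹ • w)
        + Real.sin θ • Matrix.vecMulVec ((‖r‖)⁻¹ • r) ((‖w‖)⁻¹ • w))ᵀ *
      (U + (Real.cos θ - 1) • Matrix.vecMulVec ((‖p‖)⁻¹ • p) ((‖w‖)⁻¹ • w)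
        + Real.sin θ • Matrix.vecMulVec ((‖r‖)⁻¹ • r) ((‖w‖)⁻¹ • w)) = 1 := by
  have hpf : (p : Fin n → ℝ) = U.mulVec w := by rw [hp]; rfl
  -- dot products via inner products
  have hinnw : (w : Fin d → ℝ) ⬝ᵥ (w : Fin d → ℝ) = ‖w‖ ^ 2 := by
    rw [← real_inner_self_eq_norm_sq, PiLp.inner_apply]
    simp [dotProduct, mul_comm, sq]
  have hinnr : (r : Fin n → ℝ) ⬝ᵥ (r : Fin n → ℝ) = ‖r‖ ^ 2 := by
    rw [← real_inner_self_eq_norm_sq, PiLp.inner_apply]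
    simp [dotProduct, mul_comm, sq]
  have hinnp : (p : Fin n → ℝ) ⬝ᵥ (p : Fin n → ℝ) = ‖p‖ ^ 2 := by
    rw [← real_inner_self_eq_norm_sq, PiLp.inner_apply]
    simp [dotProduct, mul_comm, sq]
  have hUp : Uᵀ.mulVec (p : Fin n → ℝ) = w := by
    rw [hpf, mulVec_mulVec, hU, one_mulVec]
  have hpp : (p : Fin n → ℝ) ⬝ᵥ (p : Fin n → ℝ) = (w : Fin d → ℝ) ⬝ᵥ (w : Fin d → ℝ) := by
    rw [hpf, dotProduct_mulVec, ← mulVec_transpose, mulVec_mulVec, hU, one_mulVec]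
  have hnp : ‖p‖ = ‖w‖ := by
    have h2 : ‖p‖ ^ 2 = ‖w‖ ^ 2 := by rw [← hinnp, ← hinnw, hpp]
    nlinarith [norm_nonneg p, norm_nonneg w, h2, sq_nonneg (‖p‖ - ‖w‖), sq_nonneg (‖p‖ + ‖w‖)]
  have hnw : ‖w‖ ≠ 0 := norm_ne_zero_iff.mpr hw
  have hnr : ‖r‖ ≠ 0 := norm_ne_zero_iff.mpr hr
  have hrp : (r : Fin n → ℝ) ⬝ᵥ (p : Fin n → ℝ) = 0 := by
    rw [hpf, dotProduct_mulVec, ← mulVec_transpose, hUr, zero_dotProduct]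
  set a := Real.cos θ - 1 with ha
  set b := Real.sin θ with hb
  set A := vecMulVec ((‖p‖)⁻¹ • (p : Fin n → ℝ)) ((‖w‖)⁻¹ • (w : Fin d → ℝ)) with hA
  set B := vecMulVec ((‖r‖)⁻¹ • (r : Fin n → ℝ)) ((‖w‖)⁻¹ • (w : Fin d → ℝ)) with hB
  set W := vecMulVec ((‖w‖)⁻¹ • (w : Fin d → ℝ)) ((‖w‖)⁻¹ • (w : Fin d → ℝ)) with hW
  have h1 : Uᵀ * A = W := by
    rw [hA, hW, mul_vv, mulVec_smul, hUp, hnp]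
  have h2 : Uᵀ * B = 0 := by
    rw [hB, mul_vv, mulVec_smul, hUr, smul_zero]
    ext i j; simp [vecMulVec_apply]
  have h3 : Aᵀ * U = W := by
    rw [hA, hW, vvT, vv_mul, ← mulVec_transpose, mulVec_smul, hUp, hnp]
  have h6 : Bᵀ * U = 0 := by
    rw [hB, vvT, vv_mul, ← mulVec_transpose, mulVec_smul, hUr, smul_zero]
    ext i j; simp [vecMulVec_apply]
  have h4 : Aᵀ * A = W := by
    rw [hA, hW, vvT, vv_mul_vv, smul_dotProduct, dotProduct_smul, hinnp, hnp,
      smul_eq_mul, smul_eq_mul]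
    rw [show (‖w‖)⁻¹ * ((‖w‖)⁻¹ * ‖w‖ ^ 2) = 1 by field_simp, one_smul]
  have h8 : Bᵀ * B = W := by
    rw [hB, hW, vvT, vv_mul_vv, smul_dotProduct, dotProduct_smul, hinnr,
      smul_eq_mul, smul_eq_mul]
    rw [show (‖r‖)⁻¹ * ((‖r‖)⁻¹ * ‖r‖ ^ 2) = 1 by field_simp, one_smul]
  have h5 : Aᵀ * B = 0 := by
    rw [hA, hB, vvT, vv_mul_vv, smul_dotProduct, dotProduct_smul]
    rw [show (p : Fin n → ℝ) ⬝ᵥ (r : Fin n → ℝ) = 0 by rw [dotProduct_comm]; exact hrp]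
    simp
  have h7 : Bᵀ * A = 0 := by
    rw [hA, hB, vvT, vv_mul_vv, smul_dotProduct, dotProduct_smul, hrp]
    simp
  have hexp : (U + a • A + b • B)ᵀ * (U + a • A + b • B)
      = 1 + (a + a + (a * a + b * b)) • W := by
    simp only [transpose_add, transpose_smul, Matrix.add_mul, Matrix.mul_add,
      Matrix.smul_mul, Matrix.mul_smul]
    rw [hU, h1, h2, h3, h4, h5, h6, h7, h8]
    simp only [smul_zero, add_zero, smul_smul]
    module
  have hcoef : a + a + (a * a + b * b) = 0 := by
    have := Real.sin_sq_add_cos_sq θ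
    rw [ha, hb]; nlinarith
  show (U + a • A + b • B)ᵀ * (U + a • A + b • B) = 1
  rw [hexp, hcoef, zero_smul, add_zero]
end
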